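/- Let d ≥ 2, k ≥ 1, e ≥ 2 be integers with e ≤ d-1 and d ≤ k+e+1. Then the domination number of the circulant digraph Γ(ℤ_{dk+e}, {1, 2, …, d-1}) equals k+1, and the same holds for Γ(ℤ_{dk+e}, {-1, 1, 2, …, d-2}). -/

import Mathlib

open Filter Pointwise

/-- Lower density of a set of integers. -/
noncomputable def lowerDensity (D : Set ℤ) : ℝ :=
  Filter.liminf (fun n : ℕ =>
    ((D ∩ Set.Icc (-(n : ℤ)) (n : ℤ)).ncard : ℝ) / (2 * (n : ℝ) + 1)) Filter.atTop

/-- `D` is a dominating set of the integer distance digraph `Γ(ℤ,S)`. -/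
def Dominating (S D : Set ℤ) : Prop :=
  ∀ m : ℤ, m ∈ D ∨ ∃ u ∈ D, ∃ s ∈ S, m = u + s

/-- Domination ratio of `Γ(ℤ,S)`. -/
noncomputable def dominationRatio (S : Set ℤ) : ℝ :=
  sInf (lowerDensity '' {D : Set ℤ | Dominating S D})

/-- `D` is an efficient dominating set of `Γ(ℤ,S)`: every integer is dominated
by exactly one element of `D`. -/
def EffDominating (S D : Set ℤ) : Prop :=
  ∀ m : ℤ, ∃! u, u ∈ D ∧ (u = m ∨ m - u ∈ S)

/-- `D'` is a dominating set of the circulant digraph `Γ(ℤ_n, S')`. -/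
def DominatingC {n : ℕ} (S' D' : Set (ZMod n)) : Prop :=
  ∀ m : ZMod n, m ∈ D' ∨ ∃ u ∈ D', ∃ s ∈ S', m = u + s

/-- Domination number of the circulant digraph `Γ(ℤ_n, S')`. -/
noncomputable def dominationNumber {n : ℕ} (S' : Set (ZMod n)) : ℕ :=
  sInf {m : ℕ | ∃ D' : Set (ZMod n), DominatingC S' D' ∧ D'.ncard = m}

lemma aux_domNum_eq {n : ℕ} (S' : Set (ZMod n)) (m : ℕ)
    (hub : ∃ D' : Set (ZMod n), DominatingC S' D' ∧ D'.ncard = m)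
    (hlb : ∀ D' : Set (ZMod n), DominatingC S' D' → m ≤ D'.ncard) :
    dominationNumber S' = m := by
  apply le_antisymm
  · exact Nat.sInf_le hub
  · refine le_csInf ⟨m, hub⟩ ?_
    rintro b ⟨D', hD, rfl⟩
    exact hlb D' hD

lemma aux_lower_bound {n : ℕ} [NeZero n] (S' D' : Set (ZMod n))
    (h : DominatingC S' D') :
    n ≤ D'.ncard * (S'.ncard + 1) := by
  have hsub : (Set.univ : Set (ZMod n)) ⊆ D' + insert 0 S' := by
    intro x _
    rcases h x with hx | ⟨u, hu, s, hs, rfl⟩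
    · exact ⟨x, hx, 0, Set.mem_insert _ _, add_zero x⟩
    · exact ⟨u, hu, s, Set.mem_insert_of_mem _ hs, rfl⟩
  calc n = (Set.univ : Set (ZMod n)).ncard := by
            simp [Set.ncard_univ, Nat.card_eq_fintype_card, ZMod.card]
  _ ≤ (D' + insert 0 S').ncard := Set.ncard_le_ncard hsub (Set.toFinite _)
  _ ≤ D'.ncard * (insert 0 S').ncard := by
        simpa only [Nat.card_coe_set_eq] using
          Set.natCard_add_le (s := D') (t := insert 0 S')
  _ ≤ D'.ncard * (S'.ncard + 1) := by
        gcongr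
        exact Set.ncard_insert_le _ _

lemma aux_ncard_D {n d k c : ℕ} [NeZero n] (hd : 0 < d) (hkd : k * d + c < n) :
    ((fun j : ℕ => ((j * d + c : ℕ) : ZMod n)) '' Set.Icc 0 k).ncard = k + 1 := by
  rw [Set.ncard_image_of_injOn, ← Finset.coe_Icc, Set.ncard_coe_finset, Nat.card_Icc]
  · omega
  intro a ha b hb hab
  simp only [Finset.coe_Icc, Set.mem_Icc] at *
  have h1 : a * d + c < n := by nlinarith [ha.2, hb.2]
  have h2 : b * d + c < n := by nlinarith [ha.2, hb.2]
  have := congrArg ZMod.val hab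
  rw [ZMod.val_cast_of_lt h1, ZMod.val_cast_of_lt h2] at this
  exact Nat.eq_of_mul_eq_mul_right hd (by omega)

lemma aux_dom1 {n d k : ℕ} [NeZero n] (hd : 0 < d) (hn : n ≤ d * (k + 1)) :
    DominatingC ((fun j : ℕ => (j : ZMod n)) '' Set.Icc 1 (d - 1))
      ((fun j : ℕ => ((j * d + 0 : ℕ) : ZMod n)) '' Set.Icc 0 k) := by
  intro x
  have hvn : x.val < n := ZMod.val_lt x
  have hx : ((x.val : ℕ) : ZMod n) = x := ZMod.natCast_rightInverse x
  set v := x.val with hv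
  set j := v / d with hj
  set r := v % d with hr
  have hdm : j * d + r = v := by rw [hj, hr]; exact Nat.div_add_mod' v d
  have hjk : j ≤ k := by
    by_contra hc
    push_neg at hc
    have h1 : (k + 1) * d ≤ j * d := Nat.mul_le_mul_right d hc
    have h2 : d * (k + 1) = (k + 1) * d := Nat.mul_comm _ _
    omega
  have hrd : r < d := Nat.mod_lt _ hd
  rcases Nat.eq_zero_or_pos r with h0 | h0
  · left
    refine ⟨j, Set.mem_Icc.mpr ⟨Nat.zero_le _, hjk⟩, ?_⟩
    show ((j * d + 0 : ℕ) : ZMod n) = x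
    rw [← hx, ← hdm, h0]
  · right
    refine ⟨((j * d + 0 : ℕ) : ZMod n), ⟨j, Set.mem_Icc.mpr ⟨Nat.zero_le _, hjk⟩, rfl⟩,
      ((r : ℕ) : ZMod n), ⟨r, Set.mem_Icc.mpr ⟨h0, by omega⟩, rfl⟩, ?_⟩
    rw [← hx, ← hdm]
    push_cast
    ring

lemma aux_dom2 {n d k : ℕ} [NeZero n] (hd : 2 ≤ d) (hn : n ≤ d * (k + 1)) :
    DominatingC ({(-1 : ZMod n)} ∪ (fun j : ℕ => (j : ZMod n)) '' Set.Icc 1 (d - 2))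
      ((fun j : ℕ => ((j * d + 1 : ℕ) : ZMod n)) '' Set.Icc 0 k) := by
  intro x
  have hd0 : 0 < d := by omega
  have hvn : x.val < n := ZMod.val_lt x
  have hx : ((x.val : ℕ) : ZMod n) = x := ZMod.natCast_rightInverse x
  set v := x.val with hv
  rcases Nat.eq_zero_or_pos v with h0 | h0
  · right
    refine ⟨((0 * d + 1 : ℕ) : ZMod n), ⟨0, Set.mem_Icc.mpr ⟨le_refl _, Nat.zero_le _⟩, rfl⟩,
      -1, Set.mem_union_left _ rfl, ?_⟩
    rw [← hx, h0]
    push_cast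
    ring
  · set j := (v - 1) / d with hj
    set r := (v - 1) % d with hr
    have hdm : j * d + r = v - 1 := by rw [hj, hr]; exact Nat.div_add_mod' _ _
    have hrd : r < d := Nat.mod_lt _ hd0
    have hjk : j ≤ k := by
      by_contra hc
      push_neg at hc
      have h1 : (k + 1) * d ≤ j * d := Nat.mul_le_mul_right d hc
      have h2 : d * (k + 1) = (k + 1) * d := Nat.mul_comm _ _
      omega
    rcases Nat.eq_zero_or_pos r with hr0 | hr1
    · left
      refine ⟨j, Set.mem_Icc.mpr ⟨Nat.zero_le _, hjk⟩, ?_⟩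
      show ((j * d + 1 : ℕ) : ZMod n) = x
      rw [← hx]
      congr 1
      omega
    · rcases Nat.lt_or_ge r (d - 1) with hcase | hcase
      · right
        refine ⟨((j * d + 1 : ℕ) : ZMod n), ⟨j, Set.mem_Icc.mpr ⟨Nat.zero_le _, hjk⟩, rfl⟩,
          ((r : ℕ) : ZMod n), Set.mem_union_right _ ⟨r, Set.mem_Icc.mpr ⟨hr1, by omega⟩, rfl⟩, ?_⟩
        rw [← hx]
        have hveq : v = j * d + 1 + r := by omega
        rw [hveq]; push_cast; ring
      · have hrd1 : r = d - 1 := by omega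
        have hmul : (j + 1) * d = j * d + d := by ring
        have hv1 : v = (j + 1) * d := by omega
        have hj1 : j + 1 ≤ k := by
          by_contra hc
          push_neg at hc
          have h1 : (k + 1) * d ≤ (j + 1) * d := Nat.mul_le_mul_right d (by omega)
          have h2 : d * (k + 1) = (k + 1) * d := Nat.mul_comm _ _
          omega
        right
        refine ⟨(((j + 1) * d + 1 : ℕ) : ZMod n), ⟨j + 1, Set.mem_Icc.mpr ⟨Nat.zero_le _, hj1⟩, rfl⟩,
          -1, Set.mem_union_left _ rfl, ?_⟩
        rw [← hx, hv1]
        push_cast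
        ring

theorem stmt_18 (d k e : ℕ) (hd : 2 ≤ d) (hk : 1 ≤ k) (he1 : 2 ≤ e) (he2 : e ≤ d - 1)
    (hde : d ≤ k + e + 1) :
    dominationNumber ((fun j : ℕ => (j : ZMod (d * k + e))) '' Set.Icc 1 (d - 1)) = k + 1 ∧
    dominationNumber ({(-1 : ZMod (d * k + e))} ∪
        (fun j : ℕ => (j : ZMod (d * k + e))) '' Set.Icc 1 (d - 2)) = k + 1 := by
  have hn0 : 0 < d * k + e := lt_of_lt_of_le (by omega) (Nat.le_add_left e (d * k))
  haveI : NeZero (d * k + e) := ⟨hn0.ne'⟩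
  have hmul1 : d * (k + 1) = d * k + d := by ring
  have hn1 : d * k + e ≤ d * (k + 1) := by omega
  have hmulc : k * d = d * k := Nat.mul_comm _ _
  have hS1 : ((fun j : ℕ => (j : ZMod (d * k + e))) '' Set.Icc 1 (d - 1)).ncard + 1 ≤ d := by
    have hicc : (Set.Icc 1 (d - 1)).ncard = d - 1 := by
      rw [← Finset.coe_Icc, Set.ncard_coe_finset, Nat.card_Icc]; omega
    have := Set.ncard_image_le (s := Set.Icc 1 (d - 1))
      (f := fun j : ℕ => (j : ZMod (d * k + e)))
    rw [hicc] at this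
    omega
  have hS2 : (({(-1 : ZMod (d * k + e))} ∪
      (fun j : ℕ => (j : ZMod (d * k + e))) '' Set.Icc 1 (d - 2)).ncard) + 1 ≤ d := by
    have h1 := Set.ncard_union_le ({(-1 : ZMod (d * k + e))})
      ((fun j : ℕ => (j : ZMod (d * k + e))) '' Set.Icc 1 (d - 2))
    have hicc : (Set.Icc 1 (d - 2)).ncard = d - 2 := by
      rw [← Finset.coe_Icc, Set.ncard_coe_finset, Nat.card_Icc]; omega
    have h2 := Set.ncard_image_le (s := Set.Icc 1 (d - 2))
      (f := fun j : ℕ => (j : ZMod (d * k + e)))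
    rw [hicc] at h2
    have h3 : ({(-1 : ZMod (d * k + e))} : Set _).ncard = 1 := Set.ncard_singleton _
    omega
  constructor
  · apply aux_domNum_eq
    · exact ⟨_, aux_dom1 (by omega) hn1, aux_ncard_D (by omega) (by omega)⟩
    · intro D' hD
      have h1 := aux_lower_bound _ D' hD
      have h2 : d * k + e ≤ D'.ncard * d := le_trans h1 (Nat.mul_le_mul (le_refl _) hS1)
      by_contra hc
      push_neg at hc
      have h3 : D'.ncard * d ≤ k * d := Nat.mul_le_mul_right d (by omega)
      omega
  · apply aux_domNum_eq
    · exact ⟨_, aux_dom2 hd hn1, aux_ncard_D (by omega) (by omega)⟩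
    · intro D' hD
      have h1 := aux_lower_bound _ D' hD
      have h2 : d * k + e ≤ D'.ncard * d := le_trans h1 (Nat.mul_le_mul (le_refl _) hS2)
      by_contra hc
      push_neg at hc
      have h3 : D'.ncard * d ≤ k * d := Nat.mul_le_mul_right d (by omega)
      omega
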